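/- Let C be a small category equipped with a subcanonical Grothendieck topology J, T a small category, and τ : C ⥤ T a functor which is subcanonical in the sense that for every object t of T the presheaf c ↦ Hom_T(τ c, t) on C is a J-sheaf. Let F : Sh(C,J) ⥤ Mod^T be a left adjoint to the forgetful functor U : Mod^T ⥤ Sh(C,J), M ↦ (c ↦ M(τ c)). Then for every object c of C there is an isomorphism of Linton models F(y c) ≅ Hom_T(τ(−), τ c), natural in c, where y : C → Sh(C,J) is the Yoneda embedding (landing in sheaves since J is subcanonical). In other words, the restriction of the free model functor F along the Yoneda embedding is isomorphic to the composite of τ with the representable-model functor. -/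

import Mathlib

open CategoryTheory

universe u

variable {C : Type u} [SmallCategory C] (J : GrothendieckTopology C)
variable {T : Type u} [SmallCategory T] (τ : C ⥤ T)

/-- The forgetful functor from Linton models of `τ : C ⥤ T` to `J`-sheaves on `C`,
sending a model `M` to the sheaf `c ↦ M (τ c)`. -/
def lintonForget :
    ObjectProperty.FullSubcategory (fun M : Tᵒᵖ ⥤ Type u => Presieve.IsSheaf J (τ.op ⋙ M)) ⥤
      Sheaf J (Type u) where
  obj M := ⟨τ.op ⋙ M.obj, (isSheaf_iff_isSheaf_of_type J (τ.op ⋙ M.obj)).mpr M.property⟩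
  map f := ⟨Functor.whiskerLeft τ.op f.hom⟩

/-- Let `(C, J)` be a site with `J` subcanonical and `τ : C ⥤ T` a
subcanonical Linton theory (each presheaf `c ↦ Hom_T (τ c, t)` on `C` is a `J`-sheaf).
For any left adjoint `F` of the forgetful functor `U : Mod^T ⥤ Sh(C, J)`, the composite
of the Yoneda embedding `y : C ⥤ Sh(C, J)` with `F` is naturally isomorphic to the
functor sending `c` to the representable Linton model `Hom_T (τ (−), τ c)`. -/
theorem free_model_of_representable [J.Subcanonical]
    (hτ : ∀ t : T, Presieve.IsSheaf J (τ.op ⋙ yoneda.obj t))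
    (F : Sheaf J (Type u) ⥤
      ObjectProperty.FullSubcategory (fun M : Tᵒᵖ ⥤ Type u => Presieve.IsSheaf J (τ.op ⋙ M)))
    (adj : F ⊣ lintonForget J τ) :
    Nonempty (J.yoneda ⋙ F ≅
      ObjectProperty.lift (fun M : Tᵒᵖ ⥤ Type u => Presieve.IsSheaf J (τ.op ⋙ M))
        (τ ⋙ yoneda) (fun c => hτ (τ.obj c))) := by
  constructor
  -- the canonical element of `F (y c)` at `τ c`, coming from the unit of the adjunction
  let e : ∀ c : C, (F.obj (J.yoneda.obj c)).obj.obj (Opposite.op (τ.obj c)) :=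
    fun c => (adj.unit.app (J.yoneda.obj c)).hom.app (Opposite.op c) (𝟙 c)
  -- the comparison natural transformation
  let α : ObjectProperty.lift (fun M : Tᵒᵖ ⥤ Type u => Presieve.IsSheaf J (τ.op ⋙ M))
      (τ ⋙ yoneda) (fun c => hτ (τ.obj c)) ⟶ J.yoneda ⋙ F :=
  { app := fun c => ObjectProperty.homMk (show yoneda.obj (τ.obj c) ⟶ (F.obj (J.yoneda.obj c)).obj from
      yonedaEquiv.symm (e c))
    naturality := fun c c' f => by
      apply ObjectProperty.hom_ext
      show yoneda.map (τ.map f) ≫ yonedaEquiv.symm (e c') =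
        (yonedaEquiv.symm (e c) ≫ (F.map (J.yoneda.map f)).hom)
      apply yonedaEquiv.injective
      rw [← yonedaEquiv_naturality, Equiv.apply_symm_apply, yonedaEquiv_comp,
        Equiv.apply_symm_apply]
      -- LHS: (F (y c')).obj.map (τ.map f).op (e c')
      -- RHS: (F.map (y f)).app (op (τ c)) (e c)
      have h1 := ConcreteCategory.congr_hom ((adj.unit.app (J.yoneda.obj c')).hom.naturality f.op) (𝟙 c')
      have h2 := ConcreteCategory.congr_hom (C := Type u) (congrArg (fun p => p.hom.app (Opposite.op c))
        (adj.unit.naturality (J.yoneda.map f))) (𝟙 c)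
      simp only [types_comp_apply] at h1 h2
      dsimp [e]
      dsimp [lintonForget] at h1 h2 ⊢
      simp only [Category.comp_id, Category.id_comp] at h1 h2
      refine h1.symm.trans (Eq.trans ?_ h2)
      exact congrArg (fun x => (adj.unit.app (J.yoneda.obj c')).hom.app (Opposite.op c) x) (Category.id_comp f).symm
    }
  -- each component of `α` is an isomorphism, by corepresentability
  have : ∀ c : C, IsIso (α.app c) := by
    intro c
    apply isIso_of_coyoneda_map_bijective
    intro M
    -- composition with `α.app c` agrees with the composite of natural bijections
    have : (fun g : (J.yoneda ⋙ F).obj c ⟶ M => α.app c ≫ g) =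
        ⇑(((adj.homEquiv (J.yoneda.obj c) M).trans
          ((J.yonedaEquiv).trans (CategoryTheory.yonedaEquiv (F := M.obj) (X := τ.obj c)).symm)).trans ((ObjectProperty.fullyFaithfulι (fun M : Tᵒᵖ ⥤ Type u => Presieve.IsSheaf J (τ.op ⋙ M))).homEquiv (X := (ObjectProperty.lift _ (τ ⋙ yoneda) (fun c => hτ (τ.obj c))).obj c) (Y := M)).symm) := by
      funext g
      apply ObjectProperty.hom_ext
      show (yonedaEquiv.symm (e c) ≫ g.hom) = _
      apply yonedaEquiv.injective
      rw [yonedaEquiv_comp, Equiv.apply_symm_apply]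
      simp only [Equiv.trans_apply, Equiv.apply_symm_apply]
      erw [Equiv.apply_symm_apply]
      show g.hom.app (Opposite.op (τ.obj c)) (e c) =
        ((adj.homEquiv (J.yoneda.obj c) M) g).hom.app (Opposite.op c) (𝟙 c)
      rw [Adjunction.homEquiv_unit]
      dsimp [lintonForget, e]
      rfl
    rw [this]
    exact Equiv.bijective _
  have : IsIso α := NatIso.isIso_of_isIso_app α
  exact (asIso α).symm
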